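/- Let t be a complete full binary tree with n ≥ 1 leaves. Then the number of internal nodes (t₁,t₂) of t whose two subtrees have unequal numbers of leaves, i.e. ℓ(t₁) ≠ ℓ(t₂), is at most ⌈log₂ n⌉. -/

import Mathlib

/-- A full binary tree: either a leaf or an ordered pair of full binary
trees. -/
inductive BTree where
  | leaf
  | node (t₁ t₂ : BTree)

namespace BTree

/-- Number of leaves. -/
def leaves : BTree → ℕ
  | .leaf => 1
  | .node t₁ t₂ => t₁.leaves + t₂.leaves

/-- Height of the tree (a single leaf has height `0`). -/
def height : BTree → ℕ
  | .leaf => 0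
  | .node t₁ t₂ => max t₁.height t₂.height + 1

/-- A tree is perfect if all of its leaves are at the same depth. -/
def Perfect : BTree → Prop
  | .leaf => True
  | .node t₁ t₂ => t₁.Perfect ∧ t₂.Perfect ∧ t₁.height = t₂.height

/-- A tree is complete if every level except possibly the last is completely
filled, and all leaves in the last level are as far left as possible:
a node is complete iff either its left subtree is perfect and its right
subtree is complete, of equal heights, or its left subtree is complete and
its right subtree is perfect, of height one less. -/
def Complete : BTree → Prop
  | .leaf => True
  | .node t₁ t₂ =>
      (t₁.Perfect ∧ t₂.Complete ∧ t₁.height = t₂.height) ∨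
      (t₁.Complete ∧ t₂.Perfect ∧ t₁.height = t₂.height + 1)

/-- The number of internal nodes `(t₁, t₂)` of `t` whose two subtrees have
unequal numbers of leaves. -/
def unbalancedCount : BTree → ℕ
  | .leaf => 0
  | .node t₁ t₂ =>
      (if t₁.leaves = t₂.leaves then 0 else 1) +
        t₁.unbalancedCount + t₂.unbalancedCount

end BTree

open BTree in
lemma btree_one_le_leaves (t : BTree) : 1 ≤ t.leaves := by
  induction t with
  | leaf => simp [leaves]
  | node t₁ t₂ ih₁ ih₂ => simp [leaves]; omega

open BTree in
lemma btree_leaves_le_pow (t : BTree) : t.leaves ≤ 2 ^ t.height := by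
  induction t with
  | leaf => simp [leaves, height]
  | node t₁ t₂ ih₁ ih₂ =>
    simp only [leaves, height, pow_succ]
    have h1 : 2 ^ t₁.height ≤ 2 ^ max t₁.height t₂.height :=
      Nat.pow_le_pow_right (by norm_num) (le_max_left _ _)
    have h2 : 2 ^ t₂.height ≤ 2 ^ max t₁.height t₂.height :=
      Nat.pow_le_pow_right (by norm_num) (le_max_right _ _)
    omega

open BTree in
lemma btree_perfect_leaves (t : BTree) (h : t.Perfect) : t.leaves = 2 ^ t.height := by
  induction t with
  | leaf => simp [leaves, height]
  | node t₁ t₂ ih₁ ih₂ =>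
    obtain ⟨h₁, h₂, heq⟩ := h
    simp only [leaves, height, ih₁ h₁, ih₂ h₂, heq, pow_succ, max_self]
    ring

open BTree in
lemma btree_perfect_unbal (t : BTree) (h : t.Perfect) : t.unbalancedCount = 0 := by
  induction t with
  | leaf => simp [unbalancedCount]
  | node t₁ t₂ ih₁ ih₂ =>
    obtain ⟨h₁, h₂, heq⟩ := h
    simp [unbalancedCount, ih₁ h₁, ih₂ h₂,
      btree_perfect_leaves t₁ h₁, btree_perfect_leaves t₂ h₂, heq]

open BTree in
lemma btree_complete_lt (t : BTree) (h : t.Complete) : 2 ^ t.height < 2 * t.leaves := by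
  induction t with
  | leaf => simp [leaves, height]
  | node t₁ t₂ ih₁ ih₂ =>
    rcases h with ⟨h₁, h₂, heq⟩ | ⟨h₁, h₂, heq⟩
    · have l1 := btree_perfect_leaves t₁ h₁
      have l2 := btree_one_le_leaves t₂
      rw [heq] at l1
      simp only [leaves, height, heq, max_self, pow_succ]
      omega
    · have := ih₁ h₁
      have l2 := btree_perfect_leaves t₂ h₂
      simp only [leaves, height, heq]
      have : max (t₂.height + 1) t₂.height = t₂.height + 1 := by omega
      simp only [this, pow_succ]
      have := ih₁ h₁
      rw [heq, pow_succ] at this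
      omega

/-- In a complete full binary tree with `n ≥ 1` leaves, the
number of internal nodes whose two subtrees have unequal numbers of leaves is
at most `⌈log₂ n⌉`. -/
theorem complete_unbalancedCount_le_clog
    (t : BTree) (ht : t.Complete) (hn : 1 ≤ t.leaves) :
    t.unbalancedCount ≤ Nat.clog 2 t.leaves := by
  clear hn
  induction t with
  | leaf => simp [BTree.unbalancedCount]
  | node t₁ t₂ ih₁ ih₂ =>
    rcases ht with ⟨h₁, h₂, heq⟩ | ⟨h₁, h₂, heq⟩
    · -- left perfect, right complete, equal heights
      have l1 := btree_perfect_leaves t₁ h₁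
      have u1 := btree_perfect_unbal t₁ h₁
      have hu2 := ih₂ h₂
      have hl2 := btree_leaves_le_pow t₂
      have hl2' := btree_one_le_leaves t₂
      simp only [BTree.unbalancedCount, BTree.leaves, u1, add_zero]
      by_cases he : t₁.leaves = t₂.leaves
      · simp only [if_pos he, zero_add]
        calc t₂.unbalancedCount ≤ Nat.clog 2 t₂.leaves := hu2
          _ ≤ _ := Nat.clog_mono_right 2 (by omega)
      · simp only [if_neg he]
        have hlt : 2 ^ t₁.height < t₁.leaves + t₂.leaves := by omega
        have hc : t₁.height < Nat.clog 2 (t₁.leaves + t₂.leaves) :=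
          (Nat.lt_clog_iff_pow_lt (by norm_num)).mpr hlt
        have hc2 : Nat.clog 2 t₂.leaves ≤ t₁.height := by
          calc Nat.clog 2 t₂.leaves ≤ Nat.clog 2 (2 ^ t₂.height) :=
                Nat.clog_mono_right 2 hl2
            _ = t₂.height := Nat.clog_pow 2 _ (by norm_num)
            _ = t₁.height := heq.symm
        omega
    · -- left complete, right perfect, left taller by one
      have l2 := btree_perfect_leaves t₂ h₂
      have u2 := btree_perfect_unbal t₂ h₂
      have hu1 := ih₁ h₁
      have hl1 := btree_leaves_le_pow t₁
      have hgt : 2 ^ t₁.height < 2 * t₁.leaves := btree_complete_lt t₁ h₁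
      rw [heq, pow_succ] at hgt
      -- so t₁.leaves > 2 ^ t₂.height
      simp only [BTree.unbalancedCount, BTree.leaves, u2, add_zero]
      have he : t₁.leaves ≠ t₂.leaves := by omega
      simp only [if_neg he]
      have hlt : 2 ^ (t₂.height + 1) < t₁.leaves + t₂.leaves := by
        rw [pow_succ]; omega
      have hc : t₂.height + 1 < Nat.clog 2 (t₁.leaves + t₂.leaves) :=
        (Nat.lt_clog_iff_pow_lt (by norm_num)).mpr hlt
      have hc1 : Nat.clog 2 t₁.leaves ≤ t₂.height + 1 := by
        calc Nat.clog 2 t₁.leaves ≤ Nat.clog 2 (2 ^ t₁.height) :=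
              Nat.clog_mono_right 2 hl1
          _ = t₁.height := Nat.clog_pow 2 _ (by norm_num)
          _ = t₂.height + 1 := heq
      omega
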